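/- On S², the potential V = (1/sin²θ)(α₁/sin²φ + α₂/cos²φ) and the function G = cos θ satisfy ∂_θV ∂_θG + (1/sin²θ) ∂_φV ∂_φG = 2VG wherever sin θ, sin φ, cos φ are nonzero. -/

import Mathlib

open Real

/-- On `S²`, the potential `V = (1/sin²θ)(α₁/sin²φ + α₂/cos²φ)` and `G = cos θ`
satisfy the compatibility equation
`∂θV ∂θG + (1/sin²θ) ∂φV ∂φG = 2VG` wherever `sin θ`, `sin φ`, `cos φ ≠ 0`. -/
theorem S9vi_compatibility (α₁ α₂ : ℝ) (V G : ℝ → ℝ → ℝ)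
    (hV : ∀ θ φ, V θ φ = (1 / (Real.sin θ) ^ 2) *
        (α₁ / (Real.sin φ) ^ 2 + α₂ / (Real.cos φ) ^ 2))
    (hG : ∀ θ φ, G θ φ = Real.cos θ) :
    ∀ θ φ : ℝ, Real.sin θ ≠ 0 → Real.sin φ ≠ 0 → Real.cos φ ≠ 0 →
      deriv (fun t => V t φ) θ * deriv (fun t => G t φ) θ
        + (1 / (Real.sin θ) ^ 2) * deriv (fun s => V θ s) φ *
            deriv (fun s => G θ s) φ
        = 2 * V θ φ * G θ φ := by
  intro θ φ hθ hφ hφ'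
  have hθ2 : (Real.sin θ) ^ 2 ≠ 0 := pow_ne_zero _ hθ
  set C := α₁ / (Real.sin φ) ^ 2 + α₂ / (Real.cos φ) ^ 2 with hC
  have h1 : (fun t => V t φ) = fun t => 1 / (Real.sin t) ^ 2 * C := by
    funext t; rw [hV]
  have h2 : (fun t => G t φ) = Real.cos := by funext t; rw [hG]
  have h3 : (fun s => G θ s) = fun _ => Real.cos θ := by funext s; rw [hG]
  have hdV : HasDerivAt (fun t => 1 / (Real.sin t) ^ 2 * C)
      ((0 * Real.sin θ ^ 2 - 1 * (2 * Real.sin θ ^ 1 * Real.cos θ)) /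
        (Real.sin θ ^ 2) ^ 2 * C) θ := by
    exact (((hasDerivAt_const θ (1:ℝ)).div ((Real.hasDerivAt_sin θ).pow 2)
      hθ2).mul_const C)
  rw [h1, h2, h3, hdV.deriv, Real.deriv_cos, deriv_const, hV, hG]
  field_simp
  have e1 : Real.sin φ ^ 2 * (Real.sin φ)⁻¹ ^ 2 = 1 := by
    rw [← mul_pow, mul_inv_cancel₀ hφ, one_pow]
  have e2 : Real.cos φ ^ 2 * (Real.cos φ)⁻¹ ^ 2 = 1 := by
    rw [← mul_pow, mul_inv_cancel₀ hφ', one_pow]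
  linear_combination (Real.cos θ * α₁ * Real.cos φ ^ 2 * 2) * e1
    + (Real.cos θ * Real.sin φ ^ 2 * α₂ * 2) * e2
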